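/- Let f : ℝ² → ℂ be continuous, not identically zero, and suppose that f(x) f(y) = f(w) f(z) for every quadruple x, y, w, z ∈ ℝ² with x + y = w + z and |x|² + |y|² = |w|² + |z|². Then f(x) ≠ 0 for every x ∈ ℝ². -/

import Mathlib

noncomputable section

abbrev R2 := EuclideanSpace ℝ (Fin 2)

/-- a continuous, not identically zero solution `f : ℝ² → ℂ` of the
multiplicative functional equation on admissible quadruples is nowhere vanishing. -/
theorem multiplicative_functional_equation_nonvanishing (f : R2 → ℂ) (hf : Continuous f)
    (hne : ∃ x : R2, f x ≠ 0)
    (hfun : ∀ x y w z : R2, x + y = w + z → ‖x‖ ^ 2 + ‖y‖ ^ 2 = ‖w‖ ^ 2 + ‖z‖ ^ 2 →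
      f x * f y = f w * f z) :
    ∀ x : R2, f x ≠ 0 := by
  by_contra hcon
  push_neg at hcon
  obtain ⟨a0, ha0⟩ := hcon
  obtain ⟨b, hb⟩ := hne
  set Z : Set R2 := f ⁻¹' {0} with hZdef
  have hZc : IsClosed Z := (isClosed_singleton).preimage hf
  have hZne : Z.Nonempty := ⟨a0, ha0⟩
  have hbZ : b ∉ Z := hb
  obtain ⟨a, haZ, hdeq⟩ := hZc.exists_infDist_eq_dist hZne b
  set d := Metric.infDist b Z with hdd
  have hd0 : 0 < d := by
    rw [hdd]
    exact (hZc.notMem_iff_infDist_pos hZne).mp hbZ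
  set u : R2 := a - b with hu_def
  have hu : ‖u‖ = d := by
    rw [hu_def, ← dist_eq_norm, dist_comm, ← hdeq]
  set v : R2 := WithLp.toLp 2 ![-u 1, u 0] with hv_def
  have hvv : (inner ℝ v v : ℝ) = inner ℝ u u := by
    rw [hv_def, PiLp.inner_apply, PiLp.inner_apply]
    simp [Fin.sum_univ_two]
    ring
  have huv : (inner ℝ u v : ℝ) = 0 := by
    simp [PiLp.inner_apply, Fin.sum_univ_two, hv_def]
    ring
  have hvu : (inner ℝ v u : ℝ) = 0 := by rw [real_inner_comm]; exact huv
  have huu : (inner ℝ u u : ℝ) = d ^ 2 := by rw [real_inner_self_eq_norm_sq, hu]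
  set p : R2 := b + (1/2 : ℝ) • (u + v) with hp_def
  set q : R2 := b + (1/2 : ℝ) • (u - v) with hq_def
  -- both p and q are within distance < d of b, hence f is nonzero there
  have hnormp : ‖(1/2 : ℝ) • (u + v)‖ ^ 2 = d ^ 2 / 2 := by
    rw [← real_inner_self_eq_norm_sq]
    simp only [real_inner_smul_left, real_inner_smul_right, inner_add_left, inner_add_right]
    simp only [huu, huv, hvu, hvv]
    ring
  have hnormq : ‖(1/2 : ℝ) • (u - v)‖ ^ 2 = d ^ 2 / 2 := by
    rw [← real_inner_self_eq_norm_sq]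
    simp only [real_inner_smul_left, real_inner_smul_right, inner_sub_left, inner_sub_right]
    simp only [huu, huv, hvu, hvv]
    ring
  have hlt : ∀ w : R2, ‖w‖ ^ 2 = d ^ 2 / 2 → ‖w‖ < d := by
    intro w hw
    have h1 : ‖w‖ ^ 2 < d ^ 2 := by nlinarith
    exact lt_of_pow_lt_pow_left₀ 2 hd0.le h1
  have hfp : f p ≠ 0 := by
    intro h0
    have hpZ : p ∈ Z := h0
    have h1 : d ≤ dist b p := Metric.infDist_le_dist_of_mem hpZ
    have h2 : dist b p < d := by
      rw [dist_comm, dist_eq_norm, hp_def]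
      simpa using hlt _ hnormp
    linarith
  have hfq : f q ≠ 0 := by
    intro h0
    have hqZ : q ∈ Z := h0
    have h1 : d ≤ dist b q := Metric.infDist_le_dist_of_mem hqZ
    have h2 : dist b q < d := by
      rw [dist_comm, dist_eq_norm, hq_def]
      simpa using hlt _ hnormq
    linarith
  -- the admissible quadruple (a, b, p, q)
  have hsum : a + b = p + q := by
    rw [hp_def, hq_def]
    have : a = b + u := by rw [hu_def]; abel
    rw [this]
    module
  have hnrm : ‖a‖ ^ 2 + ‖b‖ ^ 2 = ‖p‖ ^ 2 + ‖q‖ ^ 2 := by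
    have ha' : a = b + u := by rw [hu_def]; abel
    rw [ha', hp_def, hq_def]
    rw [← real_inner_self_eq_norm_sq, ← real_inner_self_eq_norm_sq,
      ← real_inner_self_eq_norm_sq, ← real_inner_self_eq_norm_sq]
    simp only [inner_add_left, inner_add_right, inner_sub_left, inner_sub_right,
      real_inner_smul_left, real_inner_smul_right]
    simp only [huu, huv, hvu, hvv]
    ring
  have hkey := hfun a b p q hsum hnrm
  have hfa : f a = 0 := haZ
  rw [hfa, zero_mul] at hkey
  exact (mul_ne_zero hfp hfq) hkey.symm

end
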